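/- A quadruple (x, n, B, k) with n = 2 and k = 1 is a prefix polymorphism if and only if there exists an integer t ≥ 4 such that x = t and B = t·(t − 1)/2. In other words, the prefix polymorphisms with n = 2, k = 1 are exactly the quadruples (t, 2, t·(t−1)/2, 1) for integers t ≥ 4. -/
import Mathlib


/-- A quadruple `(x, n, B, k)` of positive integers with `B ≥ 2` is a *prefix
polymorphism* if `x^n = B^k·n + x` and `B^(k-1) ≤ x < B^k` (i.e. `x` has exactly
`k` digits in base `B`). -/
def IsPrefixPolymorphism (x n B k : ℕ) : Prop :=
  0 < x ∧ 0 < n ∧ 2 ≤ B ∧ 0 < k ∧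
    x ^ n = B ^ k * n + x ∧ B ^ (k - 1) ≤ x ∧ x < B ^ k

lemma tri_key (m : ℕ) : m * (m - 1) = m * m - m := by
  cases m with
  | zero => simp
  | succ n => simp [Nat.succ_mul, Nat.mul_succ]

/-- Triangular class: the prefix polymorphisms with `n = 2` and `k = 1` are
exactly the quadruples `(t, 2, t·(t-1)/2, 1)` for integers `t ≥ 4`. -/
theorem triangular_class (x B : ℕ) :
    IsPrefixPolymorphism x 2 B 1 ↔ ∃ t : ℕ, 4 ≤ t ∧ x = t ∧ B = t * (t - 1) / 2 := by
  constructor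
  · rintro ⟨hx, -, hB, -, heq, -, hlt⟩
    simp only [pow_one] at heq hlt
    have hsq : x * x = B * 2 + x := by rw [← sq]; exact heq
    have hx4 : 4 ≤ x := by
      by_contra h
      push_neg at h
      interval_cases x <;> omega
    refine ⟨x, hx4, rfl, ?_⟩
    have h2 : 2 * B = x * (x - 1) := by
      have := tri_key x
      omega
    omega
  · rintro ⟨t, ht, rfl, rfl⟩
    have hkey := tri_key x
    have hev : 2 ∣ x * (x - 1) := by
      rcases Nat.even_or_odd x with h | h
      · exact Dvd.dvd.mul_right h.two_dvd _
      · exact Dvd.dvd.mul_left (Nat.Odd.sub_odd h odd_one).two_dvd _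
    have h2 : 2 * (x * (x - 1) / 2) = x * (x - 1) := Nat.two_mul_div_two_of_even (even_iff_two_dvd.mpr hev)
    have h4 : 4 * x ≤ x * x := Nat.mul_le_mul_right x ht
    have hquad : 2 * x < x * (x - 1) := by omega
    refine ⟨by omega, by norm_num, by omega, by norm_num, ?_, by simpa using (by omega : 1 ≤ x), by simpa using (by omega : x < x * (x - 1) / 2)⟩
    simp only [pow_one, sq]
    omega
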